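/- Let G be a row-finite directed graph which satisfies Condition (K), and let (E, v_0) be a 1-sink extension of G such that the set of paths in E with range v_0 is infinite. Let H' := {v ∈ E^0 : v ≱ v_0} and H_{v_0} := E^0 ∖ G^0, and let H_E be the inessential part of E. Then the smallest saturated hereditary subset of E^0 containing H' ∪ H_{v_0} is exactly H_E ∪ H_{v_0}; that is, H' ∨ H_{v_0} = H_E ∪ H_{v_0} in the lattice of saturated hereditary subsets of E^0. -/

import Mathlib

/-- A directed graph realized inside ambient vertex type `V` and edge type `E`,
with globally given source and range maps. -/
structure DGraph (V E : Type*) where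
  verts : Set V
  edges : Set E

variable {V E : Type*}

/-- The endpoints of every edge of the graph are vertices of the graph. -/
def WellFormed (s r : E → V) (G : DGraph V E) : Prop :=
  ∀ e ∈ G.edges, s e ∈ G.verts ∧ r e ∈ G.verts

/-- Row-finite: every vertex emits only finitely many edges. -/
def RowFinite (s : E → V) (G : DGraph V E) : Prop :=
  ∀ v : V, {e ∈ G.edges | s e = v}.Finite

/-- A sink is a vertex emitting no edges. -/
def IsSink (s : E → V) (G : DGraph V E) (v : V) : Prop :=
  v ∈ G.verts ∧ ∀ e ∈ G.edges, s e ≠ v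

/-- A source is a vertex receiving no edges. -/
def IsSource (r : E → V) (G : DGraph V E) (v : V) : Prop :=
  v ∈ G.verts ∧ ∀ e ∈ G.edges, r e ≠ v

/-- A path is a nonempty finite sequence of composable edges of the graph. -/
def IsPath (s r : E → V) (G : DGraph V E) (p : List E) : Prop :=
  p ≠ [] ∧ (∀ e ∈ p, e ∈ G.edges) ∧ p.Chain' (fun e f => r e = s f)

/-- `PathFromTo s r G p v w` : `p` is a path in `G` with source `v` and range `w`. -/
def PathFromTo (s r : E → V) (G : DGraph V E) (p : List E) (v w : V) : Prop :=
  IsPath s r G p ∧ (∃ e, p.head? = some e ∧ s e = v) ∧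
    (∃ e, p.getLast? = some e ∧ r e = w)

/-- `v ≥ w` : `v = w` or there is a path from `v` to `w`. -/
def Reach (s r : E → V) (G : DGraph V E) (v w : V) : Prop :=
  v = w ∨ ∃ p, PathFromTo s r G p v w

/-- A loop based at `v` is a path with source and range `v`. -/
def IsLoop (s r : E → V) (G : DGraph V E) (p : List E) (v : V) : Prop :=
  PathFromTo s r G p v v

/-- A simple loop returns to its base point exactly once. -/
def IsSimpleLoop (s r : E → V) (G : DGraph V E) (p : List E) (v : V) : Prop :=
  IsLoop s r G p v ∧
    ∀ i (h : i + 1 < p.length), r (p.get ⟨i, Nat.lt_of_succ_lt h⟩) ≠ v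

/-- Condition (K): every vertex is the base of no loop or of at least two
distinct simple loops. -/
def ConditionK (s r : E → V) (G : DGraph V E) : Prop :=
  ∀ v ∈ G.verts, (¬ ∃ p, IsLoop s r G p v) ∨
    ∃ p q, IsSimpleLoop s r G p v ∧ IsSimpleLoop s r G q v ∧ p ≠ q

/-- A maximal tail in `G`. -/
def MaximalTail (s r : E → V) (G : DGraph V E) (γ : Set V) : Prop :=
  γ.Nonempty ∧ γ ⊆ G.verts ∧
  (∀ v ∈ γ, ∀ w ∈ γ, ∃ y ∈ γ, Reach s r G v y ∧ Reach s r G w y) ∧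
  (∀ v w, Reach s r G v w → w ∈ γ → v ∈ γ) ∧
  (∀ w ∈ γ, ∃ e ∈ G.edges, s e = w ∧ r e ∈ γ)

/-- `(Eg, v0)` is a 1-sink extension of `G`. -/
structure OneSinkExt (s r : E → V) (G Eg : DGraph V E) (v0 : V) : Prop where
  wfG : WellFormed s r G
  wfE : WellFormed s r Eg
  sub_verts : G.verts ⊆ Eg.verts
  sub_edges : G.edges ⊆ Eg.edges
  rowfin : RowFinite s Eg
  H_fin : (Eg.verts \ G.verts).Finite
  H_no_sources : ∀ v ∈ Eg.verts \ G.verts, ¬ IsSource r Eg v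
  v0_mem : v0 ∈ Eg.verts \ G.verts
  v0_sink : IsSink s Eg v0
  sink_unique : ∀ v ∈ Eg.verts \ G.verts, IsSink s Eg v → v = v0
  no_H_loops : ∀ p v, IsLoop s r Eg p v →
    ¬ (∀ e ∈ p, s e ∈ Eg.verts \ G.verts ∧ r e ∈ Eg.verts \ G.verts)
  new_edge_range : ∀ e ∈ Eg.edges, e ∉ G.edges → r e ∈ Eg.verts \ G.verts
  sinks_preserved : ∀ v, IsSink s G v → IsSink s Eg v

/-- The closure of the sink `v0` : the union of all maximal tails of `G`
every vertex of which reaches `v0` in `Eg`. -/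
def closureSink (s r : E → V) (G Eg : DGraph V E) (v0 : V) : Set V :=
  {v | ∃ γ, MaximalTail s r G γ ∧ (∀ u ∈ γ, Reach s r Eg u v0) ∧ v ∈ γ}

/-- Hereditary subset of vertices. -/
def Hereditary (s r : E → V) (G : DGraph V E) (K : Set V) : Prop :=
  ∀ e ∈ G.edges, s e ∈ K → r e ∈ K

/-- Saturated subset of vertices. -/
def Saturated (s r : E → V) (G : DGraph V E) (K : Set V) : Prop :=
  ∀ v ∈ G.verts, ¬ IsSink s G v → (∀ e ∈ G.edges, s e = v → r e ∈ K) → v ∈ K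


section Helpers

variable (s r : E → V) (G Eg : DGraph V E)

lemma pathFromTo_append {p q : List E} {a b c : V}
    (hp : PathFromTo s r G p a b) (hq : PathFromTo s r G q b c) :
    PathFromTo s r G (p ++ q) a c := by
  obtain ⟨⟨hpne, hpmem, hpch⟩, ⟨e₁, he₁, hse₁⟩, ⟨e₂, he₂, hre₂⟩⟩ := hp
  obtain ⟨⟨hqne, hqmem, hqch⟩, ⟨e₃, he₃, hse₃⟩, ⟨e₄, he₄, hre₄⟩⟩ := hq
  refine ⟨⟨by simp [hpne], ?_, ?_⟩, ⟨e₁, ?_, hse₁⟩, ⟨e₄, ?_, hre₄⟩⟩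
  · intro e he; rcases List.mem_append.mp he with h | h
    · exact hpmem e h
    · exact hqmem e h
  · refine List.isChain_append.mpr ⟨hpch, hqch, ?_⟩
    intro x hx y hy
    rw [he₂] at hx; rw [he₃] at hy
    cases hx; cases hy; rw [hre₂, hse₃]
  · rw [List.head?_append_of_ne_nil _ hpne, he₁]
  · rw [List.getLast?_append, he₄]; rfl

lemma reach_trans {a b c : V} (h1 : Reach s r G a b) (h2 : Reach s r G b c) :
    Reach s r G a c := by
  rcases h1 with rfl | ⟨p, hp⟩
  · exact h2
  · rcases h2 with rfl | ⟨q, hq⟩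
    · exact Or.inr ⟨p, hp⟩
    · exact Or.inr ⟨p ++ q, pathFromTo_append s r G hp hq⟩

lemma reach_edge {e : E} (he : e ∈ G.edges) : Reach s r G (s e) (r e) :=
  Or.inr ⟨[e], ⟨List.cons_ne_nil _ _, by simpa using he, List.isChain_singleton _⟩,
    ⟨e, rfl, rfl⟩, ⟨e, rfl, rfl⟩⟩

lemma reach_mono (hsub : G.edges ⊆ Eg.edges) {a b : V}
    (h : Reach s r G a b) : Reach s r Eg a b := by
  rcases h with rfl | ⟨p, ⟨hne, hmem, hch⟩, h2, h3⟩
  · exact Or.inl rfl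
  · exact Or.inr ⟨p, ⟨hne, fun e he => hsub (hmem e he), hch⟩, h2, h3⟩

lemma pathFromTo_tail {e : E} {t : List E} {a b : V}
    (h : PathFromTo s r G (e :: t) a b) :
    s e = a ∧ e ∈ G.edges ∧ (t = [] → r e = b) ∧
      (t ≠ [] → PathFromTo s r G t (r e) b) := by
  obtain ⟨⟨-, hmem, hch⟩, ⟨e₁, he₁, hse₁⟩, ⟨e₂, he₂, hre₂⟩⟩ := h
  simp only [List.head?_cons, Option.some.injEq] at he₁
  subst he₁
  refine ⟨hse₁, hmem e (List.mem_cons_self), ?_, ?_⟩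
  · rintro rfl
    simp only [List.getLast?_singleton, Option.some.injEq] at he₂
    subst he₂; exact hre₂
  · intro hne
    obtain ⟨f, t', rfl⟩ := List.exists_cons_of_ne_nil hne
    unfold List.Chain' at hch; rw [List.isChain_cons_cons] at hch
    refine ⟨⟨List.cons_ne_nil _ _, fun g hg => hmem g (List.mem_cons_of_mem _ hg),
      hch.2⟩, ⟨f, rfl, hch.1.symm⟩, ⟨e₂, ?_, hre₂⟩⟩
    rw [← List.getLast?_cons_cons (a := e)]; exact he₂

lemma reach_src_mem (hwf : WellFormed s r G) {a b : V}
    (h : Reach s r G a b) (hb : b ∈ G.verts) : a ∈ G.verts := by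
  rcases h with rfl | ⟨p, ⟨hne, hmem, -⟩, ⟨e₁, he₁, hse₁⟩, -⟩
  · exact hb
  · obtain ⟨e, t, rfl⟩ := List.exists_cons_of_ne_nil hne
    simp only [List.head?_cons, Option.some.injEq] at he₁
    subst he₁
    exact hse₁ ▸ (hwf e (hmem e (List.mem_cons_self))).1

end Helpers

/-- Let `(Eg, v0)` be a 1-sink extension of a row-finite graph `G`
satisfying Condition (K), such that the set of paths in `Eg` with range `v0`
is infinite.  With `H' = {v ∈ E^0 : v ≱ v0}`, `H_{v0} = E^0 \ G^0` and `H_E`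
the inessential part, the set `H_E ∪ H_{v0}` is the smallest saturated
hereditary subset of `E^0` containing `H' ∪ H_{v0}`. -/


theorem wedge_eq_union
    (s r : E → V) (G Eg : DGraph V E) (v0 : V)
    (hGrf : RowFinite s G) (hK : ConditionK s r G)
    (hext : OneSinkExt s r G Eg v0)
    (hinf : {p : List E |
        IsPath s r Eg p ∧ ∃ e, p.getLast? = some e ∧ r e = v0}.Infinite) :
    ((G.verts \ closureSink s r G Eg v0) ∪ (Eg.verts \ G.verts)) ⊆ Eg.verts ∧
    Hereditary s r Eg
      ((G.verts \ closureSink s r G Eg v0) ∪ (Eg.verts \ G.verts)) ∧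
    Saturated s r Eg
      ((G.verts \ closureSink s r G Eg v0) ∪ (Eg.verts \ G.verts)) ∧
    ({v ∈ Eg.verts | ¬ Reach s r Eg v v0} ∪ (Eg.verts \ G.verts)) ⊆
      ((G.verts \ closureSink s r G Eg v0) ∪ (Eg.verts \ G.verts)) ∧
    (∀ S ⊆ Eg.verts, Hereditary s r Eg S → Saturated s r Eg S →
      ({v ∈ Eg.verts | ¬ Reach s r Eg v v0} ∪ (Eg.verts \ G.verts)) ⊆ S →
      ((G.verts \ closureSink s r G Eg v0) ∪ (Eg.verts \ G.verts)) ⊆ S) := by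
  have hwfE := hext.wfE
  have hsubV := hext.sub_verts
  have hsubE := hext.sub_edges
  -- Part 1
  have part1 : ((G.verts \ closureSink s r G Eg v0) ∪ (Eg.verts \ G.verts)) ⊆ Eg.verts := by
    rintro v (⟨hv, -⟩ | ⟨hv, -⟩)
    · exact hsubV hv
    · exact hv
  -- Part 2 : Hereditary
  have part2 : Hereditary s r Eg
      ((G.verts \ closureSink s r G Eg v0) ∪ (Eg.verts \ G.verts)) := by
    rintro e he (⟨hsG, hsC⟩ | ⟨hsE, hsG⟩)
    · by_cases hre : r e ∈ G.verts
      · have heG : e ∈ G.edges := by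
          by_contra h
          exact (hext.new_edge_range e he h).2 hre
        left
        refine ⟨hre, ?_⟩
        rintro ⟨γ, hγ, hγ0, hrγ⟩
        exact hsC ⟨γ, hγ, hγ0, hγ.2.2.2.1 _ _ (reach_edge s r G heG) hrγ⟩
      · exact Or.inr ⟨(hwfE e he).2, hre⟩
    · have heG : e ∉ G.edges := fun h => hsG (hext.wfG e h).1
      exact Or.inr (hext.new_edge_range e he heG)
  -- Part 3 : Saturated
  have part3 : Saturated s r Eg
      ((G.verts \ closureSink s r G Eg v0) ∪ (Eg.verts \ G.verts)) := by
    intro v hv hns hall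
    by_cases hvG : v ∈ G.verts
    · left
      refine ⟨hvG, ?_⟩
      rintro ⟨γ, hγ, hγ0, hvγ⟩
      obtain ⟨e, heG, hse, hreγ⟩ := hγ.2.2.2.2 v hvγ
      rcases hall e (hsubE heG) hse with ⟨-, hreC⟩ | ⟨-, hreG⟩
      · exact hreC ⟨γ, hγ, hγ0, hreγ⟩
      · exact hreG (hγ.2.1 hreγ)
    · exact Or.inr ⟨hv, hvG⟩
  -- Part 4
  have part4 : ({v ∈ Eg.verts | ¬ Reach s r Eg v v0} ∪ (Eg.verts \ G.verts)) ⊆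
      ((G.verts \ closureSink s r G Eg v0) ∪ (Eg.verts \ G.verts)) := by
    rintro v (⟨hvE, hnr⟩ | hv)
    · by_cases hvG : v ∈ G.verts
      · exact Or.inl ⟨hvG, fun ⟨γ, hγ, hγ0, hvγ⟩ => hnr (hγ0 v hvγ)⟩
      · exact Or.inr ⟨hvE, hvG⟩
    · exact Or.inr hv
  refine ⟨part1, part2, part3, part4, ?_⟩
  -- Part 5 : minimality
  intro S hSE hSh hSs hS'
  have reachv0 : ∀ v ∈ G.verts, v ∉ S → Reach s r Eg v v0 := by
    intro v hv hvS
    by_contra h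
    exact hvS (hS' (Or.inl ⟨hsubV hv, h⟩))
  have step : ∀ v, v ∈ G.verts → v ∉ S →
      ∃ e, e ∈ G.edges ∧ s e = v ∧ r e ∈ G.verts ∧ r e ∉ S := by
    intro v hv hvS
    have hr0 : Reach s r Eg v v0 := reachv0 v hv hvS
    have hvne : v ≠ v0 := fun h => hext.v0_mem.2 (h ▸ hv)
    rcases hr0 with h | ⟨p, hp⟩
    · exact absurd h hvne
    obtain ⟨e₀, t, rfl⟩ := List.exists_cons_of_ne_nil hp.1.1
    obtain ⟨hse₀, he₀E, -, -⟩ := pathFromTo_tail s r Eg hp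
    have hnsink : ¬ IsSink s Eg v := fun h => h.2 e₀ he₀E hse₀
    have : ¬ ∀ e ∈ Eg.edges, s e = v → r e ∈ S := by
      intro h
      exact hvS (hSs v (hsubV hv) hnsink h)
    push_neg at this
    obtain ⟨e, heE, hse, hreS⟩ := this
    have hreG : r e ∈ G.verts := by
      by_contra h
      exact hreS (hS' (Or.inr ⟨(hwfE e heE).2, h⟩))
    have heG : e ∈ G.edges := by
      by_contra h
      exact (hext.new_edge_range e heE h).2 hreG
    exact ⟨e, heG, hse, hreG, hreS⟩
  choose f hf1 hf2 hf3 hf4 using step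
  rintro v (⟨hvG, hvC⟩ | hv)
  · by_contra hvS
    apply hvC
    -- build the infinite path
    let X : ℕ → {w : V // w ∈ G.verts ∧ w ∉ S} :=
      fun n => Nat.rec ⟨v, hvG, hvS⟩
        (fun _ p => ⟨r (f p.1 p.2.1 p.2.2), hf3 p.1 p.2.1 p.2.2, hf4 p.1 p.2.1 p.2.2⟩) n
    have hXstep : ∀ n, ∃ e ∈ G.edges, s e = (X n).1 ∧ r e = (X (n+1)).1 := by
      intro n
      exact ⟨f (X n).1 (X n).2.1 (X n).2.2, hf1 _ _ _, hf2 _ _ _, rfl⟩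
    have hreachX : ∀ n m, n ≤ m → Reach s r G (X n).1 (X m).1 := by
      intro n m hnm
      induction m, hnm using Nat.le_induction with
      | base => exact Or.inl rfl
      | succ m hnm ih =>
        obtain ⟨e, heG, hse, hre⟩ := hXstep m
        exact reach_trans s r G ih (hse ▸ hre ▸ reach_edge s r G heG)
    set γ : Set V := {w | w ∈ G.verts ∧ ∃ n, Reach s r G w (X n).1} with hγdef
    have hXγ : ∀ n, (X n).1 ∈ γ := fun n => ⟨(X n).2.1, n, Or.inl rfl⟩
    have htail : MaximalTail s r G γ := by
      refine ⟨⟨(X 0).1, hXγ 0⟩, fun w hw => hw.1, ?_, ?_, ?_⟩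
      · rintro a ⟨-, n, hn⟩ b ⟨-, m, hm⟩
        refine ⟨(X (max n m)).1, hXγ _, ?_, ?_⟩
        · exact reach_trans s r G hn (hreachX n _ (le_max_left n m))
        · exact reach_trans s r G hm (hreachX m _ (le_max_right n m))
      · rintro a b hab ⟨hbG, n, hn⟩
        exact ⟨reach_src_mem s r G hext.wfG hab hbG,
          n, reach_trans s r G hab hn⟩
      · rintro w ⟨hwG, n, hn⟩
        rcases hn with rfl | ⟨p, hp⟩
        · obtain ⟨e, heG, hse, hre⟩ := hXstep n
          exact ⟨e, heG, hse, hre ▸ hXγ (n+1)⟩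
        · obtain ⟨e, t, rfl⟩ := List.exists_cons_of_ne_nil hp.1.1
          obtain ⟨hse, heG, hnil, hcons⟩ := pathFromTo_tail s r G hp
          refine ⟨e, heG, hse, (hext.wfG e heG).2, n, ?_⟩
          rcases eq_or_ne t [] with rfl | htne
          · exact Or.inl (hnil rfl)
          · exact Or.inr ⟨t, hcons htne⟩
    have hγ0 : ∀ u ∈ γ, Reach s r Eg u v0 := by
      rintro u ⟨-, n, hn⟩
      exact reach_trans s r Eg (reach_mono s r G Eg hsubE hn)
        (reachv0 (X n).1 (X n).2.1 (X n).2.2)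
    exact ⟨γ, htail, hγ0, hXγ 0⟩
  · exact hS' (Or.inr hv)
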